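/- Suppose (1 - μ_t μ_{t-1}) ψ_i^t(n) = P_i^t φ_i^{t-1}(n) + μ_t φ_i^{t+1}(n-1) and φ_i^{t+1}(n) = ψ_i^t(n) - μ_{t-1} ψ_i^t(n+1) for all i, n, t, with all P_i^t ≠ 0. Then (1 - μ_{t-1} μ_t)(∏_{i=1}^N P_i^t)^{-1} σ_n^t equals the determinant of the N×N matrix whose first column is (P_i^t)^{-1} φ_i^{t+1}(n), whose columns j = 2,…,N-1 are φ_i^t(n+j-1), and whose last column is φ_i^{t-1}(n+N-1), where σ_n^t = det(ψ_i^t(n+j-1))_{1≤i,j≤N}; here φ_i also satisfies φ_i^{t+1}(n) = φ_i^t(n) - μ_t φ_i^t(n+1). -/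
import Mathlib

lemma aux_sum {N : ℕ} (c : ℕ) (f : Fin N → ℂ) :
    (∑ k : Fin N, if (k : ℕ) = c then f k else 0) = if h : c < N then f ⟨c, h⟩ else 0 := by
  split_ifs with h
  · rw [Finset.sum_eq_single (⟨c, h⟩ : Fin N)]
    · simp
    · intro k _ hk
      rw [if_neg]
      intro hc; exact hk (Fin.ext hc)
    · simp
  · apply Finset.sum_eq_zero
    intro k _
    rw [if_neg]
    have := k.isLt
    omega

lemma aux_sum' {N : ℕ} (c : ℕ) (f : Fin N → ℂ) :
    (∑ k : Fin N, if (k : ℕ) + 1 = c then f k else 0)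
    = if h : 1 ≤ c ∧ c - 1 < N then f ⟨c - 1, h.2⟩ else 0 := by
  split_ifs with h
  · rw [Finset.sum_eq_single (⟨c - 1, h.2⟩ : Fin N)]
    · rw [if_pos (by simp; omega)]
    · intro k _ hk
      rw [if_neg]
      intro hc; apply hk; apply Fin.ext; simp; omega
    · simp
  · apply Finset.sum_eq_zero
    intro k _
    rw [if_neg]
    have := k.isLt
    omega

open Matrix in
/-- difference formula (dif6) for the auxiliary τ-function σ. -/
theorem stmt_10 (N : ℕ) (hN : 2 ≤ N) (φ ψ : Fin N → ℤ → ℤ → ℂ) (μ : ℤ → ℂ)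
    (P : Fin N → ℤ → ℂ) (hP : ∀ i t, P i t ≠ 0)
    (h6 : ∀ i t n, (1 - μ t * μ (t - 1)) * ψ i t n
          = P i t * φ i (t - 1) n + μ t * φ i (t + 1) (n - 1))
    (h4 : ∀ i t n, φ i (t + 1) n = ψ i t n - μ (t - 1) * ψ i t (n + 1))
    (h1 : ∀ i t n, φ i (t + 1) n = φ i t n - μ t * φ i t (n + 1)) :
    ∀ t n : ℤ,
      (1 - μ (t - 1) * μ t) * (∏ i, P i t)⁻¹ *
          Matrix.det (Matrix.of fun i j : Fin N => ψ i t (n + (j : ℤ)))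
      = Matrix.det (Matrix.of fun i j : Fin N =>
          if (j : ℕ) = 0 then (P i t)⁻¹ * φ i (t + 1) n
          else if (j : ℕ) = N - 1 then φ i (t - 1) (n + (j : ℤ))
          else φ i t (n + (j : ℤ))) := by
  intro t n
  -- key scalar relations
  have l2 : ∀ i m, P i t * φ i (t - 1) m = ψ i t m - μ t * ψ i t (m - 1) := by
    intro i m
    have e6 := h6 i t m
    have e4 := h4 i t (m - 1)
    rw [sub_add_cancel] at e4
    linear_combination -e6 - μ t * e4
  have l3 : ∀ i m, P i t * φ i t m = φ i (t + 1) m - μ t * φ i (t + 1) (m - 1) := by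
    intro i m
    have e1 := h1 i (t - 1) m
    rw [sub_add_cancel] at e1
    have e4a := h4 i t m
    have e4b := h4 i t (m - 1)
    rw [sub_add_cancel] at e4b
    have hl2a := l2 i m
    have hl2b := l2 i (m + 1)
    rw [add_sub_cancel_right] at hl2b
    linear_combination P i t * e1 + hl2a - μ (t - 1) * hl2b - e4a + μ t * e4b
  set Ψ : Matrix (Fin N) (Fin N) ℂ := Matrix.of fun i j : Fin N => ψ i t (n + (j : ℤ)) with hΨdef
  set T : Matrix (Fin N) (Fin N) ℂ := Matrix.of fun i j : Fin N =>
      if (j : ℕ) = 0 then (P i t)⁻¹ * φ i (t + 1) n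
      else if (j : ℕ) = N - 1 then φ i (t - 1) (n + (j : ℤ))
      else φ i t (n + (j : ℤ)) with hTdef
  set Φ : Matrix (Fin N) (Fin N) ℂ := Matrix.of fun i k : Fin N =>
      if (k : ℕ) = N - 1 then ψ i t (n + ((N - 1 : ℕ) : ℤ)) else φ i (t + 1) (n + (k : ℤ))
    with hΦdef
  set B : Matrix (Fin N) (Fin N) ℂ := Matrix.of fun m k : Fin N =>
      (if (m : ℕ) = (k : ℕ) then 1 else 0) +
      (if (m : ℕ) = (k : ℕ) + 1 then -μ (t - 1) else 0) with hBdef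
  set C : Matrix (Fin N) (Fin N) ℂ := Matrix.of fun m j : Fin N =>
      (if (m : ℕ) = (j : ℕ) then (if (j : ℕ) = N - 1 then 1 - μ (t - 1) * μ t else 1) else 0) +
      (if (m : ℕ) + 1 = (j : ℕ) then -μ t else 0) with hCdef
  have hΦ : Φ = Ψ * B := by
    ext i k
    rw [Matrix.mul_apply]
    simp only [hΨdef, hBdef, hΦdef, Matrix.of_apply]
    simp only [mul_add, mul_ite, mul_zero]
    rw [Finset.sum_add_distrib, aux_sum, aux_sum]
    rw [dif_pos k.isLt]
    by_cases hk : (k : ℕ) = N - 1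
    · rw [if_pos hk, dif_neg (by omega)]
      have : (((k : ℕ) : ℤ)) = ((N - 1 : ℕ) : ℤ) := by omega
      rw [this]
      ring
    · rw [if_neg hk, dif_pos (by omega)]
      have e4 := h4 i t (n + ((k : ℕ) : ℤ))
      have hc : ((((k : ℕ) + 1 : ℕ)) : ℤ) = ((k : ℕ) : ℤ) + 1 := by push_cast; ring
      rw [hc, ← add_assoc]
      linear_combination e4
  have hT : (Matrix.of fun i j : Fin N => P i t * T i j) = Φ * C := by
    ext i j
    rw [Matrix.mul_apply]
    simp only [hΦdef, hCdef, hTdef, Matrix.of_apply]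
    simp only [mul_add, mul_ite, mul_zero]
    rw [Finset.sum_add_distrib, aux_sum, aux_sum']
    rw [dif_pos j.isLt]
    by_cases hj0 : (j : ℕ) = 0
    · rw [dif_neg (by omega)]
      simp only [Fin.val_mk]
      rw [if_pos hj0, if_neg (by omega : ¬((j : ℕ) = N - 1)),
        if_neg (by omega : ¬((j : ℕ) = N - 1))]
      have hc : ((j : ℕ) : ℤ) = 0 := by omega
      rw [hc, add_zero, mul_inv_cancel_left₀ (hP i t)]
      ring
    · by_cases hjN : (j : ℕ) = N - 1
      · rw [dif_pos (⟨by omega, by omega⟩ : 1 ≤ (j : ℕ) ∧ (j : ℕ) - 1 < N)]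
        simp only [Fin.val_mk]
        rw [if_neg hj0, if_pos hjN, if_pos hjN, if_pos hjN,
          if_neg (by omega : ¬((j : ℕ) - 1 = N - 1))]
        have e6 := h6 i t (n + ((N - 1 : ℕ) : ℤ))
        have hc1 : (((j : ℕ)) : ℤ) = ((N - 1 : ℕ) : ℤ) := by omega
        have hc3 : n + (((j : ℕ) - 1 : ℕ) : ℤ) = n + ((N - 1 : ℕ) : ℤ) - 1 := by omega
        rw [hc1, hc3]
        linear_combination -e6
      · rw [dif_pos (⟨by omega, by omega⟩ : 1 ≤ (j : ℕ) ∧ (j : ℕ) - 1 < N)]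
        simp only [Fin.val_mk]
        rw [if_neg hj0, if_neg hjN, if_neg hjN, if_neg hjN,
          if_neg (by omega : ¬((j : ℕ) - 1 = N - 1))]
        have e3 := l3 i (n + ((j : ℕ) : ℤ))
        have hc3 : n + (((j : ℕ) - 1 : ℕ) : ℤ) = n + ((j : ℕ) : ℤ) - 1 := by omega
        rw [hc3]
        linear_combination e3
  have hdB : B.det = 1 := by
    rw [Matrix.det_of_lowerTriangular B (by
      intro i j hij
      have hlt : (i : ℕ) < (j : ℕ) := hij
      simp only [hBdef, Matrix.of_apply]
      rw [if_neg (by omega), if_neg (by omega), add_zero])]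
    apply Finset.prod_eq_one
    intro i _
    simp [hBdef, (by omega : ¬((i : ℕ) = (i : ℕ) + 1))]
  have hdC : C.det = 1 - μ (t - 1) * μ t := by
    rw [Matrix.det_of_upperTriangular (M := C) (by
      intro i j hij
      have hlt : (j : ℕ) < (i : ℕ) := hij
      simp only [hCdef, Matrix.of_apply]
      rw [if_neg (by omega), if_neg (by omega), add_zero])]
    rw [Finset.prod_eq_single (⟨N - 1, by omega⟩ : Fin N)]
    · simp [hCdef, (by omega : ¬(N - 1 + 1 = N - 1))]
    · intro k _ hk
      have hkv : ¬((k : ℕ) = N - 1) := fun hc => hk (Fin.ext (by simpa using hc))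
      simp [hCdef, hkv, (by omega : ¬((k : ℕ) + 1 = (k : ℕ)))]
    · simp
  have hPne : (∏ i, P i t) ≠ 0 := Finset.prod_ne_zero_iff.mpr fun i _ => hP i t
  have hmain : (∏ i, P i t) * T.det = (1 - μ (t - 1) * μ t) * Ψ.det := by
    calc (∏ i, P i t) * T.det
        = (Matrix.of fun i j : Fin N => P i t * T i j).det :=
          (Matrix.det_mul_column _ _).symm
      _ = (Φ * C).det := by rw [hT]
      _ = Φ.det * C.det := Matrix.det_mul _ _
      _ = (Ψ * B).det * C.det := by rw [hΦ]
      _ = Ψ.det * B.det * C.det := by rw [Matrix.det_mul]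
      _ = (1 - μ (t - 1) * μ t) * Ψ.det := by rw [hdB, hdC]; ring
  field_simp
  linear_combination hmain.symm
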